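/- Let A₁, A₂, A₃ be three non-collinear points in the real affine plane, and let P₁₂ = (1−t₁)A₁ + t₁A₂, P₂₃ = (1−t₂)A₂ + t₂A₃, P₃₁ = (1−t₃)A₃ + t₃A₁ with tᵢ ∉ {0,1}. Then P₁₂, P₂₃, P₃₁ are collinear if and only if (t₁/(1−t₁))·(t₂/(1−t₂))·(t₃/(1−t₃)) = −1. -/

import Mathlib

lemma collinear_iff_cross (p q r : ℝ × ℝ) :
    Collinear ℝ ({p, q, r} : Set (ℝ × ℝ)) ↔
      (q.1 - p.1) * (r.2 - p.2) - (q.2 - p.2) * (r.1 - p.1) = 0 := by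
  rw [collinear_iff_of_mem (Set.mem_insert p {q, r})]
  constructor
  · rintro ⟨v, hv⟩
    obtain ⟨a, ha⟩ := hv q (by simp)
    obtain ⟨b, hb⟩ := hv r (by simp)
    rw [Prod.ext_iff] at ha hb
    simp only [Prod.smul_fst, Prod.smul_snd, Prod.fst_vadd, Prod.snd_vadd, Prod.fst_add,
      Prod.snd_add, smul_eq_mul, vadd_eq_add] at ha hb
    obtain ⟨ha1, ha2⟩ := ha
    obtain ⟨hb1, hb2⟩ := hb
    rw [ha1, ha2, hb1, hb2]; ring
  · intro h
    by_cases hq : q = p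
    · refine ⟨r - p, fun x hx => ?_⟩
      rcases hx with hx | hx | hx
      · exact ⟨0, by simp [hx]⟩
      · exact ⟨0, by simp [hx, hq]⟩
      · simp only [Set.mem_singleton_iff] at hx
        exact ⟨1, by simp [hx]⟩
    · have hne : q.1 - p.1 ≠ 0 ∨ q.2 - p.2 ≠ 0 := by
        by_contra hcon
        push_neg at hcon
        apply hq
        ext
        · linarith [hcon.1]
        · linarith [hcon.2]
      refine ⟨q - p, fun x hx => ?_⟩
      rcases hx with hx | hx | hx
      · exact ⟨0, by simp [hx]⟩
      · refine ⟨1, ?_⟩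
        rw [hx]
        ext <;> simp
      · simp only [Set.mem_singleton_iff] at hx
        subst hx
        rcases hne with h1 | h1
        · refine ⟨(x.1 - p.1) / (q.1 - p.1), ?_⟩
          ext
          · simp only [Prod.smul_fst, Prod.fst_vadd, Prod.fst_add, Prod.fst_sub, smul_eq_mul, vadd_eq_add]
            field_simp
            ring
          · simp only [Prod.smul_snd, Prod.snd_vadd, Prod.snd_add, Prod.snd_sub, smul_eq_mul, vadd_eq_add]
            field_simp
            nlinarith [h]
        · refine ⟨(x.2 - p.2) / (q.2 - p.2), ?_⟩
          ext
          · simp only [Prod.smul_fst, Prod.fst_vadd, Prod.fst_add, Prod.fst_sub, smul_eq_mul, vadd_eq_add]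
            field_simp
            nlinarith [h]
          · simp only [Prod.smul_snd, Prod.snd_vadd, Prod.snd_add, Prod.snd_sub, smul_eq_mul, vadd_eq_add]
            field_simp
            ring

/-- Menelaus' theorem: `P₁₂, P₂₃, P₃₁` are collinear iff the product of the
signed edge ratios equals −1. -/
theorem stmt4 (A₁ A₂ A₃ : ℝ × ℝ)
    (hnc : ¬ Collinear ℝ ({A₁, A₂, A₃} : Set (ℝ × ℝ)))
    (t₁ t₂ t₃ : ℝ)
    (ht₁ : t₁ ≠ 0) (ht₁' : t₁ ≠ 1) (ht₂ : t₂ ≠ 0) (ht₂' : t₂ ≠ 1)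
    (ht₃ : t₃ ≠ 0) (ht₃' : t₃ ≠ 1)
    (P₁₂ P₂₃ P₃₁ : ℝ × ℝ)
    (hP₁₂ : P₁₂ = (1 - t₁) • A₁ + t₁ • A₂)
    (hP₂₃ : P₂₃ = (1 - t₂) • A₂ + t₂ • A₃)
    (hP₃₁ : P₃₁ = (1 - t₃) • A₃ + t₃ • A₁) :
    Collinear ℝ ({P₁₂, P₂₃, P₃₁} : Set (ℝ × ℝ)) ↔
      (t₁ / (1 - t₁)) * (t₂ / (1 - t₂)) * (t₃ / (1 - t₃)) = -1 := by
  rw [collinear_iff_cross] at hnc ⊢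
  subst hP₁₂ hP₂₃ hP₃₁
  simp only [Prod.smul_fst, Prod.smul_snd, Prod.fst_add, Prod.snd_add, smul_eq_mul] at hnc ⊢
  set D := (A₂.1 - A₁.1) * (A₃.2 - A₁.2) - (A₂.2 - A₁.2) * (A₃.1 - A₁.1) with hDdef
  have hD : D ≠ 0 := hnc
  have key : ((1 - t₂) * A₂.1 + t₂ * A₃.1 - ((1 - t₁) * A₁.1 + t₁ * A₂.1)) *
        ((1 - t₃) * A₃.2 + t₃ * A₁.2 - ((1 - t₁) * A₁.2 + t₁ * A₂.2)) -
      ((1 - t₂) * A₂.2 + t₂ * A₃.2 - ((1 - t₁) * A₁.2 + t₁ * A₂.2)) *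
        ((1 - t₃) * A₃.1 + t₃ * A₁.1 - ((1 - t₁) * A₁.1 + t₁ * A₂.1)) =
      ((1 - t₁) * (1 - t₂) * (1 - t₃) + t₁ * t₂ * t₃) * D := by
    rw [hDdef]; ring
  rw [key]
  have h1 : (1 : ℝ) - t₁ ≠ 0 := sub_ne_zero.mpr (Ne.symm ht₁')
  have h2 : (1 : ℝ) - t₂ ≠ 0 := sub_ne_zero.mpr (Ne.symm ht₂')
  have h3 : (1 : ℝ) - t₃ ≠ 0 := sub_ne_zero.mpr (Ne.symm ht₃')
  rw [mul_eq_zero]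
  constructor
  · rintro (hE | hE)
    · field_simp
      linarith
    · exact absurd hE hD
  · intro hE
    left
    field_simp at hE
    linarith
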